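/- Let Ω ⊆ ℂ be open and let τ, ρ : Ω → ℝ be smooth with ρ > 0, satisfying the Ribaucour equation ρ² + e^{−2τ} ρ Δ₀ρ = 1 + e^{−2τ}(ρ_x² + ρ_y²) on Ω. Set ρ* := 1/ρ and τ* := τ − log ρ. Then on Ω one has e^{−2τ}Δ₀ρ + 2ρ = e^{−2τ*}Δ₀ρ* + 2ρ*, i.e. Δρ + 2ρ = Δ*ρ* + 2ρ* where Δ and Δ* are the Laplacians of the conformal metrics e^{2τ}(dx²+dy²) and e^{2τ*}(dx²+dy²). (Since −2H/K = Δρ + 2ρ, this says that the ratio H/K of mean to Gaussian curvature is the same for a Ribaucour surface and its dual.) -/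

import Mathlib

/-- Partial derivative in the `x`-direction of a function on `ℂ ≅ ℝ²`. -/
noncomputable def pdx (u : ℂ → ℝ) (z : ℂ) : ℝ := fderiv ℝ u z 1

/-- Partial derivative in the `y`-direction of a function on `ℂ ≅ ℝ²`. -/
noncomputable def pdy (u : ℂ → ℝ) (z : ℂ) : ℝ := fderiv ℝ u z Complex.I

/-- Flat Laplacian `Δ₀u = u_xx + u_yy`. -/
noncomputable def lap (u : ℂ → ℝ) (z : ℂ) : ℝ := pdx (pdx u) z + pdy (pdy u) z

lemma pd_congr {u v : ℂ → ℝ} {Ω : Set ℂ} (hΩ : IsOpen Ω) (h : ∀ w ∈ Ω, u w = v w)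
    {z : ℂ} (hz : z ∈ Ω) (e : ℂ) : fderiv ℝ u z e = fderiv ℝ v z e := by
  rw [Filter.EventuallyEq.fderiv_eq (Filter.eventuallyEq_of_mem (hΩ.mem_nhds hz) h)]

lemma contDiffOn_pd {u : ℂ → ℝ} {Ω : Set ℂ} (hΩ : IsOpen Ω)
    (hu : ContDiffOn ℝ (⊤ : ℕ∞) u Ω) (e : ℂ) :
    ContDiffOn ℝ (⊤ : ℕ∞) (fun z => fderiv ℝ u z e) Ω := by
  have h := ((contDiffOn_infty_iff_fderiv_of_isOpen hΩ).mp hu).2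
  exact h.clm_apply contDiffOn_const

lemma pd_inv {f : ℂ → ℝ} {z : ℂ} (hf : DifferentiableAt ℝ f z) (hz : f z ≠ 0) (e : ℂ) :
    fderiv ℝ (fun w => (f w)⁻¹) z e = -((f z)^2)⁻¹ * fderiv ℝ f z e := by
  have h := ((hasFDerivAt_inv hz).comp z hf.hasFDerivAt).fderiv
  rw [show (fun w => (f w)⁻¹) = (fun x : ℝ => x⁻¹) ∘ f from rfl, h]
  simp [mul_comm]

lemma pd_mul {f g : ℂ → ℝ} {z : ℂ} (hf : DifferentiableAt ℝ f z)
    (hg : DifferentiableAt ℝ g z) (e : ℂ) :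
    fderiv ℝ (fun w => f w * g w) z e = f z * fderiv ℝ g z e + g z * fderiv ℝ f z e := by
  rw [fderiv_fun_mul hf hg]
  simp

lemma pd_neg {f : ℂ → ℝ} {z : ℂ} (e : ℂ) :
    fderiv ℝ (fun w => -(f w)) z e = -(fderiv ℝ f z e) := by
  rw [fderiv_fun_neg]; simp

lemma pd_sq {f : ℂ → ℝ} {z : ℂ} (hf : DifferentiableAt ℝ f z) (e : ℂ) :
    fderiv ℝ (fun w => (f w)^2) z e = 2 * f z * fderiv ℝ f z e := by
  have h : (fun w => (f w)^2) = fun w => f w * f w := by funext w; ring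
  rw [h, pd_mul hf hf]; ring

lemma second_deriv_inv {Ω : Set ℂ} (hΩ : IsOpen Ω) {ρ : ℂ → ℝ}
    (hρ : ContDiffOn ℝ (⊤ : ℕ∞) ρ Ω) (hne : ∀ w ∈ Ω, ρ w ≠ 0)
    {ρs : ℂ → ℝ} (hρs : ∀ w ∈ Ω, ρs w = (ρ w)⁻¹)
    {z : ℂ} (hz : z ∈ Ω) (e : ℂ) :
    fderiv ℝ (fun w => fderiv ℝ ρs w e) z e =
      2 * ((ρ z)^3)⁻¹ * (fderiv ℝ ρ z e)^2
        - ((ρ z)^2)⁻¹ * fderiv ℝ (fun w => fderiv ℝ ρ w e) z e := by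
  have hρd : ∀ w ∈ Ω, DifferentiableAt ℝ ρ w := fun w hw =>
    ((hρ.contDiffAt (hΩ.mem_nhds hw)).differentiableAt (by simp))
  have h1 : ∀ w ∈ Ω, fderiv ℝ ρs w e = -(((ρ w)^2)⁻¹) * fderiv ℝ ρ w e := by
    intro w hw
    rw [pd_congr hΩ hρs hw e]
    exact pd_inv (hρd w hw) (hne w hw) e
  rw [pd_congr hΩ h1 hz e]
  have hdinv : DifferentiableAt ℝ (fun w => (((ρ w)^2)⁻¹)) z :=
    ((hρd z hz).pow 2).inv (pow_ne_zero 2 (hne z hz))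
  have hdpd : DifferentiableAt ℝ (fun w => fderiv ℝ ρ w e) z :=
    (((contDiffOn_pd hΩ hρ e).contDiffAt (hΩ.mem_nhds hz)).differentiableAt
      (by simp))
  have hprod : (fun w => -(((ρ w)^2)⁻¹) * fderiv ℝ ρ w e)
      = fun w => -((((ρ w)^2)⁻¹) * fderiv ℝ ρ w e) := by funext w; ring
  rw [hprod, pd_neg, pd_mul hdinv hdpd e,
    pd_inv (f := fun w => ρ w ^ 2) ((hρd z hz).pow 2) (pow_ne_zero 2 (hne z hz)) e, pd_sq (hρd z hz) e]
  field_simp [hne z hz]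
  ring

/-- if `ρ > 0` satisfies the Ribaucour equation relative to `τ` on the open
set `Ω`, then with the dual data `ρ* = 1/ρ`, `τ* = τ - log ρ` one has
`e^{-2τ}Δ₀ρ + 2ρ = e^{-2τ*}Δ₀ρ* + 2ρ*` on `Ω`, i.e. `Δρ + 2ρ = Δ*ρ* + 2ρ*`: the ratio
`H/K` is the same for a Ribaucour surface and its dual. -/
theorem dual_ribaucour_preserves_mean_to_gauss_ratio
    (Ω : Set ℂ) (hΩ : IsOpen Ω) (τ ρ : ℂ → ℝ)
    (hτ : ContDiffOn ℝ (⊤ : ℕ∞) τ Ω) (hρ : ContDiffOn ℝ (⊤ : ℕ∞) ρ Ω)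
    (hρpos : ∀ z ∈ Ω, 0 < ρ z)
    (hRibaucour : ∀ z ∈ Ω, ρ z ^ 2 + Real.exp (-(2 * τ z)) * ρ z * lap ρ z
      = 1 + Real.exp (-(2 * τ z)) * (pdx ρ z ^ 2 + pdy ρ z ^ 2))
    (ρs τs : ℂ → ℝ)
    (hρs : ∀ z ∈ Ω, ρs z = 1 / ρ z)
    (hτs : ∀ z ∈ Ω, τs z = τ z - Real.log (ρ z)) :
    ∀ z ∈ Ω, Real.exp (-(2 * τ z)) * lap ρ z + 2 * ρ z
      = Real.exp (-(2 * τs z)) * lap ρs z + 2 * ρs z := by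
  intro z hz
  have hρz : ρ z ≠ 0 := ne_of_gt (hρpos z hz)
  have hne : ∀ w ∈ Ω, ρ w ≠ 0 := fun w hw => ne_of_gt (hρpos w hw)
  have hρs' : ∀ w ∈ Ω, ρs w = (ρ w)⁻¹ := fun w hw => by rw [hρs w hw, one_div]
  have hlap : lap ρs z = 2 * ((ρ z)^3)⁻¹ * (pdx ρ z ^ 2 + pdy ρ z ^ 2)
      - ((ρ z)^2)⁻¹ * lap ρ z := by
    have hx := second_deriv_inv hΩ hρ hne hρs' hz 1
    have hy := second_deriv_inv hΩ hρ hne hρs' hz Complex.I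
    have e1 : pdx (pdx ρs) z = 2 * ((ρ z)^3)⁻¹ * (pdx ρ z)^2
        - ((ρ z)^2)⁻¹ * pdx (pdx ρ) z := hx
    have e2 : pdy (pdy ρs) z = 2 * ((ρ z)^3)⁻¹ * (pdy ρ z)^2
        - ((ρ z)^2)⁻¹ * pdy (pdy ρ) z := hy
    simp only [lap]
    rw [e1, e2]; ring
  have hexp : Real.exp (-(2 * τs z)) = Real.exp (-(2 * τ z)) * ρ z ^ 2 := by
    rw [hτs z hz,
      show -(2 * (τ z - Real.log (ρ z))) = -(2 * τ z) + Real.log ((ρ z) ^ 2) by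
        rw [Real.log_pow]; push_cast; ring,
      Real.exp_add, Real.exp_log (by positivity)]
  rw [hexp, hρs z hz, hlap]
  have hrib := hRibaucour z hz
  field_simp
  linear_combination 2 * hrib
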